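/- Let a_i = i mod 3. For every n ≥ 1, in the finite Jaco-type graph J_n((a_i)) every vertex j with 2 ≤ j ≤ n has in-degree exactly 1, and the underlying undirected graph of J_n((a_i)) is connected and contains no cycle, i.e., it is a directed tree. Consequently no vertex of J_n((a_i)) has two adjacent out-neighbours, so the Jaco-type Black Arc Algorithm outputs no black arcs and b•(J_n((a_i))) = 0. -/

import Mathlib

/-- The arc relation of the finite Jaco-type graph `J_n((a_i))`: the vertices are
`1, 2, …, n ∈ ℕ` and `(i, j)` is an arc iff `1 ≤ i < j ≤ n` and `j ≤ i + a_i`. -/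
def JacoArc (a : ℕ → ℕ) (n i j : ℕ) : Prop :=
  1 ≤ i ∧ i < j ∧ j ≤ n ∧ j ≤ i + a i

/-- The arc set of the finite Jaco-type graph `J_n((a_i))`, as a set of ordered pairs. -/
def jacoArcSet (a : ℕ → ℕ) (n : ℕ) : Set (ℕ × ℕ) :=
  {p : ℕ × ℕ | JacoArc a n p.1 p.2}

/-- Given an arc set `A`, `blackAt i A` is the set of arcs of `A` both of whose endpoints are
out-neighbours of vertex `i` in `A` (the arcs of the subgraph induced by the
out-neighbourhood of `i`). -/
def blackAt (i : ℕ) (A : Set (ℕ × ℕ)) : Set (ℕ × ℕ) :=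
  {p ∈ A | (i, p.1) ∈ A ∧ (i, p.2) ∈ A}

/-- The Jaco-type Black Arc Algorithm: `algG A m` is the arc set `G_{m+1}` obtained from
`G_1 = A` by deleting, for `i = 1, …, m`, the arc set `B_i = blackAt i G_i` at step `i`. -/
def algG (A : Set (ℕ × ℕ)) : ℕ → Set (ℕ × ℕ)
  | 0 => A
  | m + 1 => algG A m \ blackAt (m + 1) (algG A m)

/-- The set of black arcs output by the Jaco-type Black Arc Algorithm on an arc set `A` with
`n` vertices: `B = B_1 ∪ ⋯ ∪ B_{n−1}` where `B_i = blackAt i G_i` and `G_i = algG A (i−1)`. -/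
def blackSet (A : Set (ℕ × ℕ)) (n : ℕ) : Set (ℕ × ℕ) :=
  ⋃ i ∈ Finset.Icc 1 (n - 1), blackAt i (algG A (i - 1))

/-- The underlying simple undirected graph of the finite Jaco-type graph `J_n((a_i))`, on the
vertex set `{1, …, n}` modelled as `Fin n` (vertex `v : Fin n` stands for the label `v + 1`). -/
def jacoUnderlying (a : ℕ → ℕ) (n : ℕ) : SimpleGraph (Fin n) :=
  SimpleGraph.fromRel (fun u v => JacoArc a n (u.val + 1) (v.val + 1))

/-- The parent function: the unique in-neighbour of a vertex `j ≥ 2`. -/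
def jacoPar (j : ℕ) : ℕ := if j % 3 = 1 then j - 2 else j - 1

lemma jaco_arc_iff (n i j : ℕ) :
    JacoArc (fun i => i % 3) n i j ↔ 2 ≤ j ∧ j ≤ n ∧ i = jacoPar j := by
  show 1 ≤ i ∧ i < j ∧ j ≤ n ∧ j ≤ i + i % 3 ↔ _
  unfold jacoPar
  split_ifs with h <;> omega

lemma jacoPar_lt {j : ℕ} (h : 2 ≤ j) : 1 ≤ jacoPar j ∧ jacoPar j < j := by
  unfold jacoPar; split_ifs with h' <;> omega

lemma jaco_no_adj_out (n : ℕ) : ∀ i u v : ℕ, JacoArc (fun i => i % 3) n i u →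
    JacoArc (fun i => i % 3) n i v → ¬ JacoArc (fun i => i % 3) n u v := by
  intro i u v hu hv huv
  rw [jaco_arc_iff] at hu hv huv
  have := jacoPar_lt hu.1
  omega

lemma algG_subset (A : Set (ℕ × ℕ)) (m : ℕ) : algG A m ⊆ A := by
  induction m with
  | zero => exact subset_rfl
  | succ m ih => exact (Set.diff_subset).trans ih

lemma jaco_blackAt_empty (n i m : ℕ) :
    blackAt i (algG (jacoArcSet (fun i => i % 3) n) m) = ∅ := by
  ext p
  simp only [blackAt, Set.mem_setOf_eq, Set.mem_empty_iff_false, iff_false, not_and]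
  intro hp h1 h2
  exact jaco_no_adj_out n i p.1 p.2
    (algG_subset _ m h1) (algG_subset _ m h2) (algG_subset _ m hp)

lemma jaco_blackSet_empty (n : ℕ) :
    blackSet (jacoArcSet (fun i => i % 3) n) n = ∅ := by
  unfold blackSet
  simp [jaco_blackAt_empty]

/-- Adjacency in the underlying graph, downwards: a neighbour with smaller value is the
parent. -/
lemma jaco_adj_down {n : ℕ} {u v : Fin n}
    (h : (jacoUnderlying (fun i => i % 3) n).Adj v u) (hlt : u.val < v.val) :
    u.val + 1 = jacoPar (v.val + 1) := by
  rw [jacoUnderlying, SimpleGraph.fromRel_adj] at h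
  rcases h.2 with h' | h'
  · rw [jaco_arc_iff] at h'
    have := jacoPar_lt (show 2 ≤ u.val + 1 by omega)
    omega
  · rw [jaco_arc_iff] at h'
    omega

lemma jaco_adj_parent {n : ℕ} (v : Fin n) (hv : 0 < v.val) :
    ∃ u : Fin n, u.val < v.val ∧ (jacoUnderlying (fun i => i % 3) n).Adj u v := by
  have h2 : 2 ≤ v.val + 1 := by omega
  have hpl := jacoPar_lt h2
  refine ⟨⟨jacoPar (v.val + 1) - 1, by omega⟩, by simp; omega, ?_⟩
  rw [jacoUnderlying, SimpleGraph.fromRel_adj]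
  constructor
  · intro he
    have : jacoPar (v.val + 1) - 1 = v.val := congrArg Fin.val he
    omega
  · left
    rw [jaco_arc_iff]
    refine ⟨h2, by omega, ?_⟩
    simp only []
    omega

lemma jaco_connected (n : ℕ) (hn : 1 ≤ n) :
    (jacoUnderlying (fun i => i % 3) n).Connected := by
  have hn0 : 0 < n := hn
  have key : ∀ k : ℕ, ∀ v : Fin n, v.val = k →
      (jacoUnderlying (fun i => i % 3) n).Reachable v ⟨0, hn0⟩ := by
    intro k
    induction k using Nat.strong_induction_on with
    | _ k ih =>
      intro v hv
      rcases Nat.eq_zero_or_pos v.val with h0 | h0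
      · have : v = ⟨0, hn0⟩ := Fin.ext h0
        rw [this]
      · obtain ⟨u, hlt, hadj⟩ := jaco_adj_parent v h0
        exact (hadj.symm.reachable).trans (ih u.val (by omega) u rfl)
  haveI : Nonempty (Fin n) := ⟨⟨0, hn0⟩⟩
  exact ⟨fun u v => (key u.val u rfl).trans (key v.val v rfl).symm⟩

lemma jaco_acyclic (n : ℕ) : (jacoUnderlying (fun i => i % 3) n).IsAcyclic := by
  set G := jacoUnderlying (fun i => i % 3) n with hG
  intro v c hc
  have hvmem : v ∈ c.support := c.start_mem_support
  have hSne : c.support.toFinset.Nonempty := ⟨v, List.mem_toFinset.mpr hvmem⟩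
  set m : Fin n := c.support.toFinset.max' hSne with hm
  have hmmem : m ∈ c.support := List.mem_toFinset.mp (c.support.toFinset.max'_mem hSne)
  set c' := c.rotate m hmmem with hc'def
  have hc' : c'.IsCycle := hc.rotate hmmem
  -- every vertex of c'.support.tail is ≤ m
  have htail : ∀ x : Fin n, x ∈ c'.support.tail → x ≤ m := by
    intro x hx
    have hrot := SimpleGraph.Walk.support_rotate c m hmmem
    have : x ∈ c.support.tail := hrot.mem_iff.mp hx
    exact c.support.toFinset.le_max' x
      (List.mem_toFinset.mpr (List.mem_of_mem_tail this))
  -- first step of the cycle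
  obtain ⟨x, hadjx, p, hpeq⟩ :=
    (SimpleGraph.Walk.not_nil_iff).mp hc'.not_nil
  have hcyc2 : p.IsPath ∧ s(m, x) ∉ p.edges := by
    have := hpeq ▸ hc'
    exact (SimpleGraph.Walk.cons_isCycle_iff p hadjx).mp this
  -- last step of the cycle
  have hpn : ¬ p.Nil := by
    intro hnil
    have : p.length = 0 := SimpleGraph.Walk.nil_iff_length_eq.mp hnil
    have hxm : x = m := by
      have := SimpleGraph.Walk.eq_of_length_eq_zero this
      exact this
    exact hadjx.ne' hxm
  have hprn : ¬ p.reverse.Nil := by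
    rwa [SimpleGraph.Walk.nil_iff_length_eq, SimpleGraph.Walk.length_reverse,
      ← SimpleGraph.Walk.nil_iff_length_eq]
  obtain ⟨y, hadjy, q, hqeq⟩ := (SimpleGraph.Walk.not_nil_iff).mp hprn
  -- s(m, y) is an edge of p
  have hymem : s(m, y) ∈ p.edges := by
    have h1 : s(m, y) ∈ p.reverse.edges := by
      rw [hqeq]; simp [SimpleGraph.Walk.edges_cons]
    rw [SimpleGraph.Walk.edges_reverse, List.mem_reverse] at h1
    exact h1
  -- x and y are in c'.support.tail
  have hxtail : x ∈ c'.support.tail := by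
    rw [hpeq, SimpleGraph.Walk.support_cons]
    exact p.start_mem_support
  have hytail : y ∈ c'.support.tail := by
    rw [hpeq, SimpleGraph.Walk.support_cons]
    have : y ∈ p.reverse.support := by
      rw [hqeq, SimpleGraph.Walk.support_cons]
      exact List.mem_cons_of_mem _ q.start_mem_support
    rwa [SimpleGraph.Walk.support_reverse, List.mem_reverse] at this
  have hxlt : x.val < m.val := by
    have h1 : x < m := lt_of_le_of_ne (htail x hxtail) hadjx.ne'
    exact h1
  have hylt : y.val < m.val := by
    have h1 : y < m := lt_of_le_of_ne (htail y hytail) hadjy.ne'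
    exact h1
  have hx := jaco_adj_down hadjx hxlt
  have hy := jaco_adj_down hadjy hylt
  have hxy : x = y := Fin.ext (by omega)
  have heq : s(m, x) = s(m, y) := by rw [hxy]
  exact hcyc2.2 (by rw [heq]; exact hymem)

/-- Let `a_i = i mod 3`.  For every `n ≥ 1`, in the finite Jaco-type graph
`J_n((a_i))` every vertex `j` with `2 ≤ j ≤ n` has in-degree exactly `1`, and the underlying
undirected graph is connected and contains no cycle (it is a directed tree).  Consequently no
vertex has two adjacent out-neighbours, so the Jaco-type Black Arc Algorithm outputs no black
arcs and `b•(J_n((a_i))) = 0`. -/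
theorem mod3_jaco_is_tree (n : ℕ) (hn : 1 ≤ n) :
    (∀ j : ℕ, 2 ≤ j → j ≤ n →
      Set.ncard {i : ℕ | JacoArc (fun i => i % 3) n i j} = 1) ∧
    (jacoUnderlying (fun i => i % 3) n).Connected ∧
    (jacoUnderlying (fun i => i % 3) n).IsAcyclic ∧
    (∀ i u v : ℕ, JacoArc (fun i => i % 3) n i u → JacoArc (fun i => i % 3) n i v →
      ¬ JacoArc (fun i => i % 3) n u v) ∧
    blackSet (jacoArcSet (fun i => i % 3) n) n = ∅ ∧
    Set.ncard (blackSet (jacoArcSet (fun i => i % 3) n) n) = 0 := by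
  refine ⟨?_, jaco_connected n hn, jaco_acyclic n, jaco_no_adj_out n,
    jaco_blackSet_empty n, by rw [jaco_blackSet_empty n]; exact Set.ncard_empty _⟩
  intro j h2 hjn
  have : {i : ℕ | JacoArc (fun i => i % 3) n i j} = {jacoPar j} := by
    ext i
    rw [Set.mem_setOf_eq, jaco_arc_iff]
    simp [h2, hjn]
  rw [this, Set.ncard_singleton]
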